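/- Let p be a prime, D a finite-dimensional ℚ_p-vector space, φ : D → D a bijective ℚ_p-linear map, and L ⊆ D a ℤ_p-lattice (finitely generated ℤ_p-submodule spanning D) such that φ^{-1}(L) ⊆ p²·L. Then 1 − p·φ : D → D is bijective. -/

import Mathlib

/-- Let `p` be a prime, `D` a finite-dimensional `ℚ_p`-vector space,
`φ : D → D` a bijective `ℚ_p`-linear map and `L ⊆ D` a `ℤ_p`-lattice
(finitely generated `ℤ_p`-submodule spanning `D`) such that
`φ⁻¹(L) ⊆ p²·L`.  Then `1 − p·φ : D → D` is bijective. -/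
theorem stmt_9 (p : ℕ) [Fact p.Prime]
    (D : Type*) [AddCommGroup D] [Module ℚ_[p] D] [FiniteDimensional ℚ_[p] D]
    [Module ℤ_[p] D] [IsScalarTower ℤ_[p] ℚ_[p] D]
    (φ : D →ₗ[ℚ_[p]] D) (hφ : Function.Bijective φ)
    (L : Submodule ℤ_[p] D) (hFG : L.FG)
    (hspan : Submodule.span ℚ_[p] (L : Set D) = ⊤)
    (hpre : ∀ x : D, φ x ∈ L → ∃ y ∈ L, x = ((p : ℤ_[p]) ^ 2) • y) :
    Function.Bijective ((LinearMap.id : D →ₗ[ℚ_[p]] D) - (p : ℚ_[p]) • φ) := by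
  have hp1 : (1 : ℝ) < (p : ℝ) := by
    exact_mod_cast (Fact.out : p.Prime).one_lt
  have hpQ : (p : ℚ_[p]) ≠ 0 := by
    exact_mod_cast (Fact.out : p.Prime).ne_zero
  have ztoq : ∀ (c : ℤ_[p]) (x : D), c • x = (c : ℚ_[p]) • x := by
    intro c x
    rw [← PadicInt.algebraMap_apply, algebraMap_smul]
  have hpows : ∀ n : ℕ, (((p : ℤ_[p]) ^ n : ℤ_[p]) : ℚ_[p]) = (p : ℚ_[p]) ^ n := by
    intro n
    rw [PadicInt.coe_pow, PadicInt.coe_natCast]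
  -- injectivity suffices
  have hinj : Function.Injective ((LinearMap.id : D →ₗ[ℚ_[p]] D) - (p : ℚ_[p]) • φ) := by
    rw [← LinearMap.ker_eq_bot, LinearMap.ker_eq_bot']
    intro x hx
    simp only [LinearMap.sub_apply, LinearMap.id_apply, LinearMap.smul_apply,
      sub_eq_zero] at hx
    -- hx : x = p • φ x
    have heig : φ x = (p : ℚ_[p])⁻¹ • x := by
      have h2 : (p : ℚ_[p])⁻¹ • x = (p : ℚ_[p])⁻¹ • ((p : ℚ_[p]) • φ x) := congrArg _ hx
      rw [smul_smul, inv_mul_cancel₀ hpQ, one_smul] at h2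
      exact h2.symm
    -- Step 1: find k with p^k • x ∈ L
    have hstep1 : ∃ k : ℕ, ((p : ℤ_[p]) ^ k) • x ∈ L := by
      set S : Submodule ℚ_[p] D :=
        { carrier := {z | ∃ k : ℕ, ((p : ℤ_[p]) ^ k) • z ∈ L}
          add_mem' := by
            rintro a b ⟨k, hk⟩ ⟨l, hl⟩
            refine ⟨max k l, ?_⟩
            rw [smul_add]
            refine Submodule.add_mem _ ?_ ?_
            · have h : ((p : ℤ_[p]) ^ (max k l)) • a
                  = ((p : ℤ_[p]) ^ (max k l - k)) • (((p : ℤ_[p]) ^ k) • a) := by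
                rw [smul_smul, ← pow_add, Nat.sub_add_cancel (le_max_left k l)]
              rw [h]; exact Submodule.smul_mem _ _ hk
            · have h : ((p : ℤ_[p]) ^ (max k l)) • b
                  = ((p : ℤ_[p]) ^ (max k l - l)) • (((p : ℤ_[p]) ^ l) • b) := by
                rw [smul_smul, ← pow_add, Nat.sub_add_cancel (le_max_right k l)]
              rw [h]; exact Submodule.smul_mem _ _ hl
          zero_mem' := ⟨0, by simp⟩
          smul_mem' := by
            rintro q a ⟨k, hk⟩
            obtain ⟨m, hm⟩ := pow_unbounded_of_one_lt ‖q‖ hp1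
            have hc : ‖(p : ℚ_[p]) ^ m * q‖ ≤ 1 := by
              rw [norm_mul, norm_pow, Padic.norm_p, inv_pow]
              refine inv_mul_le_one_of_le₀ hm.le ?_
              positivity
            obtain ⟨c, hcq⟩ : ∃ c : ℤ_[p], (c : ℚ_[p]) = (p : ℚ_[p]) ^ m * q :=
              ⟨⟨_, hc⟩, rfl⟩
            refine ⟨m + k, ?_⟩
            have h : ((p : ℤ_[p]) ^ (m + k)) • (q • a)
                = c • (((p : ℤ_[p]) ^ k) • a) := by
              rw [ztoq, ztoq, ztoq, smul_smul, smul_smul, hpows, hpows, hcq, pow_add]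
              ring_nf
            rw [h]
            exact Submodule.smul_mem _ _ hk }
      have hxS : x ∈ S := by
        have hxt : x ∈ Submodule.span ℚ_[p] (L : Set D) := by rw [hspan]; trivial
        refine Submodule.span_le.mpr ?_ hxt
        intro z hz
        exact ⟨0, by simpa using hz⟩
      exact hxS
    obtain ⟨k, hyL⟩ := hstep1
    set y : D := ((p : ℤ_[p]) ^ k) • x with hy
    -- y is also an eigenvector: φ y = p⁻¹ • y
    have heigy : φ y = (p : ℚ_[p])⁻¹ • y := by
      rw [hy, ztoq, map_smul, heig, smul_comm]
    -- Step 2: y ∈ p^n L for all n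
    have hstep2 : ∀ n : ℕ, ∃ z ∈ L, y = ((p : ℤ_[p]) ^ n) • z := by
      intro n
      induction n with
      | zero => exact ⟨y, hyL, by simp⟩
      | succ n ih =>
        obtain ⟨z, hzL, hz⟩ := ih
        -- φ z = p⁻¹ • z
        have heigz : φ z = (p : ℚ_[p])⁻¹ • z := by
          have h := heigy
          rw [hz, ztoq, hpows, map_smul, smul_comm] at h
          exact smul_right_injective D (pow_ne_zero n hpQ) h
        have hmem : φ ((p : ℚ_[p]) • z) ∈ L := by
          rw [map_smul, heigz, smul_smul, mul_inv_cancel₀ hpQ, one_smul]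
          exact hzL
        obtain ⟨w, hwL, hw⟩ := hpre _ hmem
        -- p • z = p^2 • w, hence z = p • w
        have hzw : z = (p : ℤ_[p]) • w := by
          have h1 : (p : ℚ_[p]) • z = (p : ℚ_[p]) • ((p : ℚ_[p]) • w) := by
            rw [hw, ztoq, hpows, pow_two, ← smul_smul]
          have h2 := smul_right_injective D hpQ h1
          rw [h2, ztoq, PadicInt.coe_natCast]
        refine ⟨w, hwL, ?_⟩
        rw [hz, hzw, smul_smul, ← pow_succ]
    -- Step 3: coordinates of y vanish, so y = 0
    have hy0 : y = 0 := by
      obtain ⟨s, hsL⟩ := hFG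
      set b := Module.finBasis ℚ_[p] D with hb
      rw [← b.forall_coord_eq_zero_iff]
      intro i
      set f : D →ₗ[ℚ_[p]] ℚ_[p] := b.coord i with hf
      set C : ℝ := (insert (0 : ℝ) (s.image fun g => ‖f g‖)).max' (by simp) with hC
      have hC0 : 0 ≤ C := Finset.le_max' _ _ (by simp)
      -- every element of L has ‖f ·‖ ≤ C
      have hbound : ∀ z ∈ L, ‖f z‖ ≤ C := by
        intro z hz
        rw [← hsL] at hz
        induction hz using Submodule.span_induction with
        | mem g hg =>
          exact Finset.le_max' _ _ (by
            simp only [Finset.mem_insert, Finset.mem_image]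
            exact Or.inr ⟨g, hg, rfl⟩)
        | zero => simpa using hC0
        | add u v _ _ hu hv =>
          rw [map_add]
          exact le_trans (Padic.nonarchimedean _ _) (max_le hu hv)
        | smul c u _ hu =>
          rw [ztoq, map_smul, smul_eq_mul, norm_mul]
          calc ‖(c : ℚ_[p])‖ * ‖f u‖ ≤ 1 * ‖f u‖ := by
                have := PadicInt.norm_le_one c
                rw [PadicInt.norm_def] at this
                exact mul_le_mul_of_nonneg_right this (norm_nonneg _)
            _ = ‖f u‖ := one_mul _
            _ ≤ C := hu
      by_contra hne
      have hpos : 0 < ‖f y‖ := norm_pos_iff.mpr hne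
      obtain ⟨n, hn⟩ := pow_unbounded_of_one_lt (C / ‖f y‖) hp1
      obtain ⟨z, hzL, hz⟩ := hstep2 n
      have h1 : ‖f y‖ = ((p : ℝ) ^ n)⁻¹ * ‖f z‖ := by
        rw [hz, ztoq, hpows, map_smul, smul_eq_mul, norm_mul, norm_pow,
          Padic.norm_p, inv_pow]
      have h2 : (p : ℝ) ^ n * ‖f y‖ ≤ C := by
        rw [h1, ← mul_assoc, mul_inv_cancel₀ (by positivity), one_mul]
        exact hbound z hzL
      have h3 : (p : ℝ) ^ n ≤ C / ‖f y‖ := (le_div_iff₀ hpos).mpr h2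
      exact absurd (lt_of_le_of_lt h3 hn) (lt_irrefl _)
    -- conclude x = 0
    have hfin : ((p : ℚ_[p]) ^ k) • x = 0 := by
      rw [← hpows, ← ztoq, ← hy, hy0]
    exact (smul_eq_zero.mp hfin).resolve_left (pow_ne_zero k hpQ)
  exact ⟨hinj, LinearMap.injective_iff_surjective.mp hinj⟩
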